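/- arXiv:2505.01377 — 3 statements merged into one kernel-verified Lean document; each statement's English description precedes it below -/
import Mathlib

section
/- Let K : ℝⁿ → ℝ be continuous, coercive (K(p) → ∞ as |p| → ∞), with K(0) = 0 = min K, and let M > 0. Set A = {p ∈ ℝⁿ : K(p) ≤ M}. Suppose the following condition (H4) holds: for every η > 0 there exists ψ_η > 0 such that whenever K(p) − M ≤ 0 and K(p+q) − M ≥ η for some p, q ∈ ℝⁿ, one has K(p+sq) − M ≥ s·(K(p+q) − M) + ψ_η·(s−1) for all s ≥ 1. Then A is a convex subset of ℝⁿ. -/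
/-- Under condition (H4), the sublevel set `A = {K ≤ M}` is convex. -/
theorem stmt_4 {n : ℕ} (K : EuclideanSpace ℝ (Fin n) → ℝ) (M : ℝ) (hM : 0 < M)
    (hKcont : Continuous K)
    (hKcoer : Filter.Tendsto K (Filter.cocompact _) Filter.atTop)
    (hK0 : K 0 = 0) (hKmin : ∀ p, 0 ≤ K p)
    (hH4 : ∀ η : ℝ, 0 < η → ∃ ψ : ℝ, 0 < ψ ∧
      ∀ p q : EuclideanSpace ℝ (Fin n), K p - M ≤ 0 → η ≤ K (p + q) - M →
        ∀ s : ℝ, 1 ≤ s → s * (K (p + q) - M) + ψ * (s - 1) ≤ K (p + s • q) - M) :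
    Convex ℝ {p : EuclideanSpace ℝ (Fin n) | K p ≤ M} := by
  intro a ha b hb t u ht hu htu
  simp only [Set.mem_setOf_eq] at ha hb ⊢
  by_contra h
  push_neg at h
  have hu0 : 0 < u := by
    rcases hu.lt_or_eq with h' | h'
    · exact h'
    · exfalso
      have : t = 1 := by linarith
      rw [← h', this] at h
      simp at h
      linarith
  have hη : 0 < K (t • a + u • b) - M := by linarith
  obtain ⟨ψ, hψ, hH⟩ := hH4 _ hη
  have hc : a + u • (b - a) = t • a + u • b := by
    have : t = 1 - u := by linarith
    rw [this]; module
  have hs : (1 : ℝ) ≤ 1 / u := one_le_one_div hu0 (by linarith)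
  have key := hH a (u • (b - a)) (by linarith) (by rw [hc]) (1 / u) hs
  have hb' : a + (1 / u) • u • (b - a) = b := by
    rw [smul_smul, one_div_mul_cancel hu0.ne', one_smul]; module
  rw [hc, hb'] at key
  nlinarith [mul_pos (lt_of_lt_of_le one_pos hs) hη,
    mul_nonneg hψ.le (by linarith : (0:ℝ) ≤ 1 / u - 1)]
end

section
/- Let K : ℝⁿ → ℝ be continuous, coercive, with K(0) = 0 = min K, and let M > 0. Assume condition (H4): for every η > 0 there exists ψ_η > 0 such that whenever there exists V ∈ [0, M] with K(p) − V ≤ 0 and K(p+q) − V ≥ η, then K(p+sq) − V ≥ s·(K(p+q) − V) + ψ_η·(s−1) for all s ≥ 1. Then K is convex on the set A = {p : K(p) ≤ M}: for all p, r ∈ A, K((p+r)/2) ≤ (K(p) + K(r))/2. -/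
/-- Under condition (H4) (with intermediate values `V ∈ [0,M]`),
`K` is midpoint convex on `A = {K ≤ M}`. -/
theorem stmt_5 {n : ℕ} (K : EuclideanSpace ℝ (Fin n) → ℝ) (M : ℝ) (hM : 0 < M)
    (hKcont : Continuous K)
    (hKcoer : Filter.Tendsto K (Filter.cocompact _) Filter.atTop)
    (hK0 : K 0 = 0) (hKmin : ∀ p, 0 ≤ K p)
    (hH4 : ∀ η : ℝ, 0 < η → ∃ ψ : ℝ, 0 < ψ ∧
      ∀ V ∈ Set.Icc (0 : ℝ) M, ∀ p q : EuclideanSpace ℝ (Fin n),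
        K p - V ≤ 0 → η ≤ K (p + q) - V →
        ∀ s : ℝ, 1 ≤ s → s * (K (p + q) - V) + ψ * (s - 1) ≤ K (p + s • q) - V) :
    ∀ p r : EuclideanSpace ℝ (Fin n), K p ≤ M → K r ≤ M →
      K ((1 / 2 : ℝ) • (p + r)) ≤ (K p + K r) / 2 := by
  have key : ∀ p r : EuclideanSpace ℝ (Fin n), K p ≤ M → K r ≤ M → K p ≤ K r →
      K ((1 / 2 : ℝ) • (p + r)) ≤ (K p + K r) / 2 := by
    intro p r hp hr hpr
    by_contra h
    push_neg at h
    set m := (1 / 2 : ℝ) • (p + r) with hm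
    have hmp : K p < K m := by linarith
    obtain ⟨ψ, hψ, hψ4⟩ := hH4 (K m - K p) (by linarith)
    have h1 : p + (m - p) = m := by abel
    have h2 : p + (2 : ℝ) • (m - p) = r := by rw [hm]; module
    have h3 := hψ4 (K p) ⟨hKmin p, hp⟩ p (m - p) (by linarith)
      (by rw [h1]) 2 (by norm_num)
    rw [h1, h2] at h3
    linarith
  intro p r hp hr
  rcases le_total (K p) (K r) with hpr | hpr
  · exact key p r hp hr hpr
  · have := key r p hr hp hpr
    rw [add_comm r p] at this
    linarith
end

section
/- Under the same hypotheses as in the previous statement (K continuous, coercive, K(0)=0=min K, condition (H4) with values V ∈ [0,M]), for every p ∈ A = {K ≤ M} and every r ∉ A one has the strict midpoint inequality K((p+r)/2) < (K(p) + K(r))/2. -/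
/-- Under condition (H4), for `p ∈ A = {K ≤ M}` and `r ∉ A`, the strict
midpoint inequality holds. -/
theorem stmt_6 {n : ℕ} (K : EuclideanSpace ℝ (Fin n) → ℝ) (M : ℝ) (hM : 0 < M)
    (hKcont : Continuous K)
    (hKcoer : Filter.Tendsto K (Filter.cocompact _) Filter.atTop)
    (hK0 : K 0 = 0) (hKmin : ∀ p, 0 ≤ K p)
    (hH4 : ∀ η : ℝ, 0 < η → ∃ ψ : ℝ, 0 < ψ ∧
      ∀ V ∈ Set.Icc (0 : ℝ) M, ∀ p q : EuclideanSpace ℝ (Fin n),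
        K p - V ≤ 0 → η ≤ K (p + q) - V →
        ∀ s : ℝ, 1 ≤ s → s * (K (p + q) - V) + ψ * (s - 1) ≤ K (p + s • q) - V) :
    ∀ p r : EuclideanSpace ℝ (Fin n), K p ≤ M → M < K r →
      K ((1 / 2 : ℝ) • (p + r)) < (K p + K r) / 2 := by
  intro p r hp hr
  set m : EuclideanSpace ℝ (Fin n) := (1 / 2 : ℝ) • (p + r) with hm
  by_cases hc : K m ≤ K p
  · linarith
  push_neg at hc
  obtain ⟨ψ, hψ, h⟩ := hH4 (K m - K p) (by linarith)
  have hq : p + (1 / 2 : ℝ) • (r - p) = m := by rw [hm]; module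
  have hr2 : p + (2 : ℝ) • ((1 / 2 : ℝ) • (r - p)) = r := by module
  have key := h (K p) ⟨hKmin p, hp⟩ p ((1 / 2 : ℝ) • (r - p)) (by linarith)
    (by rw [hq]) 2 one_le_two
  rw [hq, hr2] at key
  linarith
end
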